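/- Reservation value is antitone in mean-preserving contractions: if ν is a mean-preserving contraction of μ (both Borel probability measures on [0,1]) and z_μ, z_ν are the reservation values solving c = ∫ max(x - z, 0) dμ and c = ∫ max(x - z, 0) dν respectively (assuming solutions exist for c > 0), then z_ν ≤ z_μ. -/

import Mathlib

open MeasureTheory

/-- `ν` is a mean-preserving contraction of `μ`. -/
def IsMPC (μ ν : Measure ℝ) : Prop :=
  ∀ φ : ℝ → ℝ, ConvexOn ℝ (Set.Icc (0 : ℝ) 1) φ → Continuous φ →
    ∫ x, φ x ∂ν ≤ ∫ x, φ x ∂μ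

lemma maxsub_convex (z : ℝ) : ConvexOn ℝ (Set.Icc (0 : ℝ) 1) (fun x => max (x - z) 0) :=
  ((convexOn_id (convex_Icc 0 1)).sub (concaveOn_const _ (convex_Icc 0 1))).sup
    (convexOn_const _ (convex_Icc 0 1))

lemma maxsub_cont (z : ℝ) : Continuous (fun x : ℝ => max (x - z) 0) :=
  (continuous_id.sub continuous_const).max continuous_const

lemma maxsub_integrable (ν : Measure ℝ) [IsProbabilityMeasure ν]
    (hν : ν (Set.Icc 0 1) = 1) (z : ℝ) :
    Integrable (fun x => max (x - z) 0) ν := by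
  have hcompl : ν (Set.Icc (0:ℝ) 1)ᶜ = 0 := by
    have h := measure_compl (μ := ν) (s := Set.Icc (0:ℝ) 1) measurableSet_Icc
      (measure_ne_top ν _)
    rw [measure_univ, hν] at h
    simpa using h
  have hae : ∀ᵐ x ∂ν, x ∈ Set.Icc (0:ℝ) 1 := by
    rw [ae_iff]
    exact hcompl
  refine Integrable.mono' (integrable_const (max (1 - z) 0))
    (maxsub_cont z).aestronglyMeasurable ?_
  filter_upwards [hae] with x hx
  rw [Real.norm_eq_abs, abs_of_nonneg (le_max_right _ _)]
  exact max_le_max (by linarith [hx.2]) le_rfl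

/-- Reservation values are antitone in mean-preserving contractions: if `ν` is a
mean-preserving contraction of `μ` and `z_μ`, `z_ν` solve the reservation-value
equations `c = ∫ max (x - z) 0 d·` for `c > 0`, then `z_ν ≤ z_μ`. -/
theorem reservation_value_antitone_mpc
    (μ ν : Measure ℝ) [IsProbabilityMeasure μ] [IsProbabilityMeasure ν]
    (hμ : μ (Set.Icc 0 1) = 1) (hν : ν (Set.Icc 0 1) = 1)
    (hmpc : IsMPC μ ν)
    (c zμ zν : ℝ) (hc : 0 < c)
    (hzμ : c = ∫ x, max (x - zμ) 0 ∂μ)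
    (hzν : c = ∫ x, max (x - zν) 0 ∂ν) :
    zν ≤ zμ := by
  by_contra hlt
  push_neg at hlt
  -- ν (Ici zν) > 0
  have hpos : 0 < ν (Set.Ici zν) := by
    rcases eq_zero_or_pos (ν (Set.Ici zν)) with h0 | h
    · have : (fun x => max (x - zν) 0) =ᵐ[ν] 0 := by
        rw [Filter.EventuallyEq, ae_iff]
        refine measure_mono_null (fun x hx => ?_) h0
        simp only [Set.mem_setOf_eq, Pi.zero_apply] at hx
        by_contra hxn
        simp only [Set.mem_Ici, not_le] at hxn
        exact hx (by rw [max_eq_right (by linarith : x - zν ≤ (0:ℝ))])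
      rw [integral_congr_ae this] at hzν
      simp at hzν
      linarith
    · exact h
  have htpos : 0 < (ν (Set.Ici zν)).toReal :=
    ENNReal.toReal_pos hpos.ne' (measure_ne_top ν _)
  -- pointwise inequality
  set g : ℝ → ℝ := Set.indicator (Set.Ici zν) (fun _ => zν - zμ) with hg
  have hgint : Integrable g ν :=
    (integrable_const (zν - zμ)).indicator measurableSet_Ici
  have hineq : ∀ x, max (x - zν) 0 + g x ≤ max (x - zμ) 0 := by
    intro x
    rcases le_or_gt zν x with hx | hx
    · have : g x = zν - zμ := Set.indicator_of_mem hx _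
      rw [this, max_eq_left (by linarith : (0:ℝ) ≤ x - zν),
        max_eq_left (by linarith : (0:ℝ) ≤ x - zμ)]
      linarith
    · have : g x = 0 := Set.indicator_of_notMem (by simpa using hx) _
      rw [this, max_eq_right (by linarith : x - zν ≤ 0)]
      simp [le_max_right]
  have hmono : ∫ x, (max (x - zν) 0 + g x) ∂ν ≤ ∫ x, max (x - zμ) 0 ∂ν :=
    integral_mono ((maxsub_integrable ν hν zν).add hgint)
      (maxsub_integrable ν hν zμ) hineq
  rw [integral_add (maxsub_integrable ν hν zν) hgint] at hmono
  have hgval : ∫ x, g x ∂ν = (zν - zμ) * (ν (Set.Ici zν)).toReal := by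
    rw [hg, integral_indicator_const _ measurableSet_Ici, smul_eq_mul, mul_comm]
    rfl
  have hmpc' : ∫ x, max (x - zμ) 0 ∂ν ≤ ∫ x, max (x - zμ) 0 ∂μ :=
    hmpc _ (maxsub_convex zμ) (maxsub_cont zμ)
  have : c + (zν - zμ) * (ν (Set.Ici zν)).toReal ≤ c := by
    calc c + (zν - zμ) * (ν (Set.Ici zν)).toReal
        = ∫ x, max (x - zν) 0 ∂ν + ∫ x, g x ∂ν := by rw [hgval, hzν]
      _ ≤ ∫ x, max (x - zμ) 0 ∂ν := hmono
      _ ≤ ∫ x, max (x - zμ) 0 ∂μ := hmpc'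
      _ = c := hzμ.symm
  nlinarith
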